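/- arXiv:2112.14424 — 2 statements merged into one kernel-verified Lean document; each statement's English description precedes it below -/
import Mathlib

section
/- For the two-qudit ensemble E consisting of the 2d(d−1) states ρ_{i,j}^{(k)} = λ|Ψ_{i,j}^{(k)}⟩⟨Ψ_{i,j}^{(k)}| + (1−λ)σ (i < j, k = 1,2,3,4) with equal prior probabilities 1/(2d(d−1)), where 0 < λ ≤ 1 and σ is any two-qudit state, the guessing probability is p_G(E) = (1 + λ(d²−1)) / (2d(d−1)). -/
open Matrix ComplexOrder Kronecker

noncomputable section

abbrev Op2 (d : ℕ) := Matrix (Fin d × Fin d) (Fin d × Fin d) ℂ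

/-- Partial transpose with respect to the second tensor factor. -/
def PT {d : ℕ} (M : Op2 d) : Op2 d :=
  Matrix.of fun p q => M (p.1, q.2) (q.1, p.2)

/-- Standard basis vector |a⟩ of ℂ^d. -/
def ket1 {d : ℕ} (a : Fin d) : Fin d → ℂ := fun x => if x = a then 1 else 0

/-- Product basis vector |a b⟩ = |a⟩ ⊗ |b⟩ of ℂ^d ⊗ ℂ^d. -/
def ket2 {d : ℕ} (a b : Fin d) : (Fin d × Fin d) → ℂ := fun p => if p = (a, b) then 1 else 0

/-- Rank-one projection |v⟩⟨v|. -/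
def proj {ι : Type*} [Fintype ι] (v : ι → ℂ) : Matrix ι ι ℂ := vecMulVec v (star v)

/-- Bell-type states Ψ_{i,j}^{(k)}; here k : Fin 4 encodes k+1 ∈ {1,2,3,4}. -/
def Psi {d : ℕ} (i j : Fin d) : Fin 4 → ((Fin d × Fin d) → ℂ) := fun k =>
  ![ ((Real.sqrt 2 : ℂ))⁻¹ • (ket2 i i + ket2 j j),
     ((Real.sqrt 2 : ℂ))⁻¹ • (ket2 i i - ket2 j j),
     ((Real.sqrt 2 : ℂ))⁻¹ • (ket2 i j + ket2 j i),
     ((Real.sqrt 2 : ℂ))⁻¹ • (ket2 i j - ket2 j i) ] k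

/-- 𝟙_{i,j} = (|i⟩⟨i|+|j⟩⟨j|) ⊗ (|i⟩⟨i|+|j⟩⟨j|). -/
def oneij {d : ℕ} (i j : Fin d) : Op2 d :=
  (proj (ket1 i) + proj (ket1 j)) ⊗ₖ (proj (ket1 i) + proj (ket1 j))

/-- The product-basis measurement operators M_{i,j}^{(k)}. -/
def Mprod {d : ℕ} (i j : Fin d) : Fin 4 → Op2 d := fun k =>
  ![ ((d : ℂ) - 1)⁻¹ • proj (ket2 i i),
     ((d : ℂ) - 1)⁻¹ • proj (ket2 j j),
     proj (ket2 i j),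
     proj (ket2 j i) ] k

/-- Index set of the example ensemble: pairs i < j together with k ∈ {1,2,3,4}. -/
abbrev Idx (d : ℕ) := {p : Fin d × Fin d // p.1 < p.2} × Fin 4

/-- The states ρ_{i,j}^{(k)} = λ|Ψ⟩⟨Ψ| + (1-λ)σ of the example ensemble. -/
def rhoE {d : ℕ} (lam : ℝ) (σ : Op2 d) (t : Idx d) : Op2 d :=
  (lam : ℂ) • proj (Psi t.1.1.1 t.1.1.2 t.2) + ((1 - lam : ℝ) : ℂ) • σ

set_option linter.unusedSectionVars false
set_option maxHeartbeats 1000000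

namespace PGaux

variable {d : ℕ} {ι : Type*} [Fintype ι] [DecidableEq ι]

lemma proj_apply (v : ι → ℂ) (p q : ι) : proj v p q = v p * star (v q) := rfl

lemma proj_hermitian (v : ι → ℂ) : (proj v).IsHermitian := by
  unfold Matrix.IsHermitian
  ext p q
  simp [proj, vecMulVec_apply, conjTranspose_apply, mul_comm]

lemma proj_mulVec (v x : ι → ℂ) : proj v *ᵥ x = (star v ⬝ᵥ x) • v := by
  funext p
  simp only [mulVec, dotProduct, proj, vecMulVec_apply, Pi.star_apply, Pi.smul_apply, smul_eq_mul,
    Finset.sum_mul]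
  exact Finset.sum_congr rfl fun q _ => by ring

lemma proj_psd (v : ι → ℂ) : (proj v).PosSemidef := by
  refine PosSemidef.of_dotProduct_mulVec_nonneg (proj_hermitian v) fun x => ?_
  rw [proj_mulVec, dotProduct_smul]
  have h : star x ⬝ᵥ v = (starRingEnd ℂ) (star v ⬝ᵥ x) := by
    unfold dotProduct
    rw [map_sum]
    exact Finset.sum_congr rfl fun q _ => by simp [mul_comm]
  rw [h, smul_eq_mul, Complex.mul_conj]
  exact_mod_cast Complex.normSq_nonneg _

lemma psd_smul {A : Matrix ι ι ℂ} (hA : A.PosSemidef) {r : ℝ} (hr : 0 ≤ r) :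
    ((r : ℂ) • A).PosSemidef := by
  refine PosSemidef.of_dotProduct_mulVec_nonneg ?_ fun x => ?_
  · unfold Matrix.IsHermitian
    rw [conjTranspose_smul, hA.1.eq]
    congr 1
    simp [Complex.star_def, Complex.conj_ofReal]
  · rw [smul_mulVec, dotProduct_smul, smul_eq_mul]
    exact mul_nonneg (by exact_mod_cast hr) (hA.dotProduct_mulVec_nonneg x)

lemma proj_mul_proj (v : ι → ℂ) : proj v * proj v = (star v ⬝ᵥ v) • proj v := by
  ext p q
  simp only [mul_apply, proj, vecMulVec_apply, Pi.star_apply, Matrix.smul_apply, dotProduct, smul_eq_mul,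
    Finset.sum_mul]
  exact Finset.sum_congr rfl fun r _ => by ring

lemma one_sub_proj_psd {v : ι → ℂ} (hv : star v ⬝ᵥ v = 1) : (1 - proj v).PosSemidef := by
  have hP : proj v * proj v = proj v := by rw [proj_mul_proj, hv, one_smul]
  have hH : (1 - proj v)ᴴ = 1 - proj v := by
    rw [conjTranspose_sub, conjTranspose_one, (proj_hermitian v).eq]
  have key : 1 - proj v = (1 - proj v)ᴴ * (1 - proj v) := by
    rw [hH, sub_mul, one_mul, mul_sub, mul_one, hP]
    abel
  rw [key]
  exact posSemidef_conjTranspose_mul_self _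

lemma trace_re_nonneg {A : Matrix ι ι ℂ} (hA : A.PosSemidef) : 0 ≤ A.trace.re := by
  have h : ∀ i, 0 ≤ A i i := fun i => by
    have h2 := hA.dotProduct_mulVec_nonneg (Pi.single i 1)
    have hs : star ((Pi.single i 1 : ι → ℂ)) = Pi.single i 1 := by
      funext j; simp [Pi.single_apply, Pi.star_apply, apply_ite (star : ℂ → ℂ)]
    rw [hs] at h2
    simpa [single_dotProduct, Matrix.mulVec_single] using h2
  have : A.trace.re = ∑ i, (A i i).re := by
    simp [Matrix.trace, Matrix.diag, Complex.re_sum]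
  rw [this]
  exact Finset.sum_nonneg fun i _ => (Complex.le_def.mp (h i)).1

lemma trace_mul_re_nonneg {A B : Matrix ι ι ℂ} (hA : A.PosSemidef) (hB : B.PosSemidef) :
    0 ≤ ((A * B).trace).re := by
  obtain ⟨C, rfl⟩ : ∃ C : Matrix ι ι ℂ, A = Cᴴ * C := by
    open scoped MatrixOrder in
    obtain ⟨X, hX, -, hXX⟩ := CFC.exists_sqrt_of_isSelfAdjoint_of_quasispectrumRestricts
      hA.nonneg.isSelfAdjoint (QuasispectrumRestricts.nnreal_of_nonneg hA.nonneg)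
    refine ⟨X, ?_⟩
    have e : Xᴴ = X := hX
    rw [e]
    exact hXX.symm
  rw [Matrix.mul_assoc, Matrix.trace_mul_comm]
  exact trace_re_nonneg (hB.mul_mul_conjTranspose_same C)

lemma trace_proj_mul (v : ι → ℂ) (M : Matrix ι ι ℂ) :
    (proj v * M).trace = star v ⬝ᵥ (M *ᵥ v) := by
  simp only [Matrix.trace, Matrix.diag, mul_apply, proj, vecMulVec_apply, Pi.star_apply,
    mulVec, dotProduct, Finset.mul_sum]
  rw [Finset.sum_comm]
  exact Finset.sum_congr rfl fun q _ => Finset.sum_congr rfl fun p _ => by ring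

lemma trace_proj_proj (u : ι → ℂ) (v : ι → ℂ) :
    (proj u * proj v).trace = (star v ⬝ᵥ u) * (star u ⬝ᵥ v) := by
  rw [trace_proj_mul, proj_mulVec, dotProduct_smul, smul_eq_mul]

lemma star_ket2 (a b : Fin d) : star (ket2 a b) = ket2 a b := by
  funext p
  simp only [Pi.star_apply, ket2]
  split <;> simp

lemma dot_ket2 (a b c e : Fin d) :
    star (ket2 a b) ⬝ᵥ ket2 c e = if ((a,b) : Fin d × Fin d) = (c,e) then 1 else 0 := by
  rw [star_ket2]
  unfold ket2 dotProduct
  rw [Finset.sum_eq_single ((a,b) : Fin d × Fin d)]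
  · simp
  · intro p _ hp; simp [hp]
  · simp

lemma sum_pairs {M : Type*} [AddCommMonoid M] (g : Fin d × Fin d → M) :
    ∑ t : {p : Fin d × Fin d // p.1 < p.2}, (g t.1 + g t.1.swap)
      = ∑ p ∈ Finset.univ.filter (fun p : Fin d × Fin d => p.1 ≠ p.2), g p := by
  rw [← Finset.sum_subtype (Finset.univ.filter (fun p : Fin d × Fin d => p.1 < p.2))
      (by simp) (fun p => g p + g p.swap)]
  rw [Finset.sum_add_distrib]
  have h2 : ∑ p ∈ Finset.univ.filter (fun p : Fin d × Fin d => p.1 < p.2), g p.swap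
      = ∑ p ∈ Finset.univ.filter (fun p : Fin d × Fin d => p.2 < p.1), g p := by
    refine Finset.sum_nbij' (fun p => p.swap) (fun p => p.swap) ?_ ?_ ?_ ?_ ?_ <;> simp
  rw [h2]
  have hsplit : (Finset.univ.filter (fun p : Fin d × Fin d => p.1 ≠ p.2))
      = (Finset.univ.filter (fun p : Fin d × Fin d => p.1 < p.2)) ∪
        (Finset.univ.filter (fun p : Fin d × Fin d => p.2 < p.1)) := by
    ext p
    simp only [Finset.mem_filter, Finset.mem_union, Finset.mem_univ, true_and]
    constructor
    · exact fun h => h.lt_or_gt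
    · rintro (h | h)
      · exact h.ne
      · exact h.ne'
  have hdisj : Disjoint (Finset.univ.filter (fun p : Fin d × Fin d => p.1 < p.2))
      (Finset.univ.filter (fun p : Fin d × Fin d => p.2 < p.1)) := by
    rw [Finset.disjoint_left]
    intro p hp hq
    simp only [Finset.mem_filter] at hp hq
    exact absurd hq.2 (not_lt.mpr hp.2.le)
  rw [hsplit, Finset.sum_union hdisj]

lemma sum_diag {M : Type*} [AddCommMonoid M] (g : Fin d × Fin d → M) :
    ∑ p ∈ Finset.univ.filter (fun p : Fin d × Fin d => p.1 = p.2), g p = ∑ i, g (i, i) := by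
  refine Finset.sum_nbij' (fun p => p.1) (fun i => (i, i)) (by simp) (by simp) ?_ (by simp) ?_
  · intro a ha
    simp only [Finset.mem_filter] at ha
    exact Prod.ext rfl ha.2
  · intro a ha
    simp only [Finset.mem_filter] at ha
    exact congrArg g (Prod.ext (rfl : a.1 = a.1) ha.2.symm)

lemma card_offdiag :
    (Finset.univ.filter (fun p : Fin d × Fin d => p.1 ≠ p.2)).card = d * d - d := by
  have h : (Finset.univ.filter (fun p : Fin d × Fin d => p.1 ≠ p.2))
      = (Finset.univ : Finset (Fin d)).offDiag := by
    ext p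
    simp [Finset.mem_offDiag]
  rw [h, Finset.offDiag_card]
  simp

lemma sum_proj_ket2 : ∑ p : Fin d × Fin d, proj (ket2 p.1 p.2) = (1 : Op2 d) := by
  ext q r
  simp only [Matrix.sum_apply, proj_apply, ket2]
  rw [Finset.sum_eq_single q]
  · by_cases h : q = r <;> simp [h, Matrix.one_apply, eq_comm]
  · intro p _ hp
    have h1 : ¬ (q = (p.1, p.2)) := fun h => hp (by rw [h])
    simp [h1]
  · simp

lemma conj_c_mul_c : (star ((Real.sqrt 2 : ℂ))⁻¹) * ((Real.sqrt 2 : ℂ))⁻¹ = 1/2 := by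
  rw [show (star ((Real.sqrt 2 : ℂ))⁻¹) = ((Real.sqrt 2 : ℂ))⁻¹ by
    rw [Complex.star_def, map_inv₀, Complex.conj_ofReal]]
  rw [← mul_inv]
  norm_num [← Complex.ofReal_mul, Real.mul_self_sqrt]

lemma bell_pair (u w : ι → ℂ) :
    proj (((Real.sqrt 2 : ℂ))⁻¹ • (u + w)) + proj (((Real.sqrt 2 : ℂ))⁻¹ • (u - w))
      = proj u + proj w := by
  have hc := conj_c_mul_c
  ext p q
  simp only [Matrix.add_apply, proj_apply, Pi.smul_apply, Pi.add_apply, Pi.sub_apply,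
    Pi.star_apply, smul_eq_mul, star_mul', star_add, star_sub]
  linear_combination (2 * u p * star (u q) + 2 * w p * star (w q)) * hc

lemma psi_norm {i j : Fin d} (hij : i ≠ j) (k : Fin 4) :
    star (Psi i j k) ⬝ᵥ Psi i j k = 1 := by
  have hc := conj_c_mul_c
  have key : ∀ u : (Fin d × Fin d) → ℂ, star u ⬝ᵥ u = 2 →
      star (((Real.sqrt 2 : ℂ))⁻¹ • u) ⬝ᵥ (((Real.sqrt 2 : ℂ))⁻¹ • u) = 1 := by
    intro u hu
    rw [star_smul, smul_dotProduct, dotProduct_smul, hu, smul_eq_mul, smul_eq_mul,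
      ← mul_assoc, hc]
    norm_num
  have expand : ∀ a b c e : Fin d, ((a,b) : Fin d × Fin d) ≠ (c,e) →
      star (ket2 a b + ket2 c e) ⬝ᵥ (ket2 a b + ket2 c e) = 2 ∧
      star (ket2 a b - ket2 c e) ⬝ᵥ (ket2 a b - ket2 c e) = 2 := by
    intro a b c e h
    constructor <;>
      norm_num [star_add, star_sub, add_dotProduct, dotProduct_add, sub_dotProduct,
        dotProduct_sub, dot_ket2, h, h.symm]
  have h1 : ((i,i) : Fin d × Fin d) ≠ (j,j) := by simp [Prod.ext_iff, hij]
  have h2 : ((i,j) : Fin d × Fin d) ≠ (j,i) := by simp [Prod.ext_iff, hij]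
  fin_cases k
  · exact key _ (expand i i j j h1).1
  · exact key _ (expand i i j j h1).2
  · exact key _ (expand i j j i h2).1
  · exact key _ (expand i j j i h2).2

end PGaux

open PGaux

theorem pG_example {d : ℕ} (hd : 2 ≤ d) (lam : ℝ) (hlam0 : 0 < lam) (hlam1 : lam ≤ 1)
    (σ : Op2 d) (hσ : σ.PosSemidef ∧ σ.trace = 1) :
    IsGreatest
      {x | ∃ M : Idx d → Op2 d, (∀ t, (M t).PosSemidef) ∧ (∑ t, M t = 1) ∧
        x = ∑ t, (1 / (2 * d * (d - 1)) : ℝ) * ((rhoE lam σ t * M t).trace).re}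
      ((1 + lam * ((d : ℝ) ^ 2 - 1)) / (2 * d * (d - 1))) := by
  obtain ⟨hσpsd, hσtr⟩ := hσ
  have hdR : (2:ℝ) ≤ (d:ℝ) := by exact_mod_cast hd
  have hd1R : ((d:ℝ) - 1) ≠ 0 := by linarith
  have hd0R : (d:ℝ) ≠ 0 := by linarith
  have hdC : ((d:ℂ) - 1) ≠ 0 := by
    have : ((d:ℝ):ℂ) - 1 ≠ 0 := by
      rw [show ((d:ℝ):ℂ) - 1 = (((d:ℝ) - 1 : ℝ) : ℂ) by push_cast; ring]
      exact_mod_cast hd1R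
    simpa using this
  have hcastd : (((d:ℝ) - 1 : ℝ) : ℂ) = (d:ℂ) - 1 := by push_cast; ring
  set c : ℝ := ((d:ℝ) - 1)⁻¹ with hc_def
  have hc0 : 0 ≤ c := by
    rw [hc_def]
    exact inv_nonneg.mpr (by linarith)
  have hcastc : ((c:ℝ):ℂ) = ((d:ℂ) - 1)⁻¹ := by
    rw [hc_def, Complex.ofReal_inv, hcastd]
  -- the witness POVM
  set co : Fin 4 → ℝ := fun k => if (k:ℕ) < 2 then c else 1 with hco_def
  have hco0 : ∀ k, 0 ≤ co k := fun k => by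
    rw [hco_def]; dsimp only; split
    · exact hc0
    · norm_num
  set Mw : Idx d → Op2 d :=
    fun t => ((co t.2 : ℝ) : ℂ) • proj (Psi t.1.1.1 t.1.1.2 t.2) with hMw_def
  have hne : ∀ t : Idx d, t.1.1.1 ≠ t.1.1.2 := fun t => ne_of_lt t.1.2
  have hMw_psd : ∀ t, (Mw t).PosSemidef := fun t => psd_smul (proj_psd _) (hco0 t.2)
  -- completeness of the witness POVM
  have hco_eval : co 0 = c ∧ co 1 = c ∧ co 2 = 1 ∧ co 3 = 1 := ⟨rfl, rfl, rfl, rfl⟩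
  have hMw_sum : ∑ t, Mw t = (1 : Op2 d) := by
    have hpair : ∀ i j : Fin d, ∑ k : Fin 4, ((co k : ℝ):ℂ) • proj (Psi i j k)
        = (((c:ℝ):ℂ) • proj (ket2 i i) + proj (ket2 i j))
          + (((c:ℝ):ℂ) • proj (ket2 j j) + proj (ket2 j i)) := by
      intro i j
      rw [Fin.sum_univ_four, hco_eval.1, hco_eval.2.1, hco_eval.2.2.1, hco_eval.2.2.2,
        Complex.ofReal_one, one_smul, one_smul, ← smul_add]
      have hb1 : proj (Psi i j 0) + proj (Psi i j 1)
          = proj (ket2 i i) + proj (ket2 j j) := by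
        show proj (((Real.sqrt 2 : ℂ))⁻¹ • (ket2 i i + ket2 j j))
          + proj (((Real.sqrt 2 : ℂ))⁻¹ • (ket2 i i - ket2 j j)) = _
        exact bell_pair _ _
      have hb2 : proj (Psi i j 2) + proj (Psi i j 3)
          = proj (ket2 i j) + proj (ket2 j i) := by
        show proj (((Real.sqrt 2 : ℂ))⁻¹ • (ket2 i j + ket2 j i))
          + proj (((Real.sqrt 2 : ℂ))⁻¹ • (ket2 i j - ket2 j i)) = _
        exact bell_pair _ _
      rw [add_assoc, hb2, ← add_assoc, hb1]
      rw [smul_add]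
      abel
    have hMw_apply : ∀ (s : {p : Fin d × Fin d // p.1 < p.2}) (k : Fin 4),
        Mw (s, k) = ((co k : ℝ):ℂ) • proj (Psi s.1.1 s.1.2 k) := fun s k => rfl
    rw [Fintype.sum_prod_type]
    simp only [hMw_apply]
    have step1 : (∑ s : {p : Fin d × Fin d // p.1 < p.2},
          ∑ k : Fin 4, ((co k : ℝ):ℂ) • proj (Psi s.1.1 s.1.2 k))
        = ∑ s : {p : Fin d × Fin d // p.1 < p.2},
            ((fun p : Fin d × Fin d => ((c:ℝ):ℂ) • proj (ket2 p.1 p.1) + proj (ket2 p.1 p.2)) s.1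
              + (fun p : Fin d × Fin d => ((c:ℝ):ℂ) • proj (ket2 p.1 p.1) + proj (ket2 p.1 p.2)) s.1.swap) :=
      Finset.sum_congr rfl (fun s _ => hpair s.1.1 s.1.2)
    rw [step1]
    refine (sum_pairs (fun p : Fin d × Fin d =>
      ((c:ℝ):ℂ) • proj (ket2 p.1 p.1) + proj (ket2 p.1 p.2))).trans ?_
    -- now evaluate the off-diagonal sum
    set G : Fin d × Fin d → Op2 d :=
      fun p => ((c:ℝ):ℂ) • proj (ket2 p.1 p.1) + proj (ket2 p.1 p.2) with hG_def
    have hsplit := Finset.sum_filter_add_sum_filter_not Finset.univ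
      (fun p : Fin d × Fin d => p.1 = p.2) G
    have huniv : ∑ p : Fin d × Fin d, G p
        = ((c:ℝ):ℂ) • (d • ∑ i, proj (ket2 i i)) + 1 := by
      rw [hG_def]
      rw [Finset.sum_add_distrib, sum_proj_ket2, ← Finset.smul_sum]
      congr 2
      rw [Fintype.sum_prod_type]
      rw [Finset.sum_congr rfl (fun i _ => Finset.sum_const (proj (ket2 i i)))]
      simp [Finset.smul_sum]
    have hdiag : ∑ p ∈ Finset.univ.filter (fun p : Fin d × Fin d => p.1 = p.2), G p
        = ((c:ℝ):ℂ) • (∑ i, proj (ket2 i i)) + ∑ i, proj (ket2 i i) := by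
      rw [sum_diag]
      rw [hG_def]
      rw [Finset.sum_add_distrib, ← Finset.smul_sum]
    have goal_eq : ∑ p ∈ Finset.univ.filter (fun p : Fin d × Fin d => ¬ p.1 = p.2), G p
        = 1 := by
      have h := hsplit
      rw [hdiag, huniv] at h
      set S : Op2 d := ∑ i, proj (ket2 i i) with hS_def
      have hsmul : ((c:ℝ):ℂ) • (d • S) = ((c:ℝ):ℂ) • S + S := by
        rw [← Nat.cast_smul_eq_nsmul ℂ d S, smul_smul]
        rw [show ((c:ℝ):ℂ) * (d:ℂ) = ((c:ℝ):ℂ) + 1 by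
          rw [hcastc]; field_simp; ring]
        rw [add_smul, one_smul]
      rw [hsmul] at h
      have h2 : ∑ p ∈ Finset.univ.filter (fun p : Fin d × Fin d => ¬ p.1 = p.2), G p
          = (((c:ℝ):ℂ) • S + S + 1) - (((c:ℝ):ℂ) • S + S) := by
        rw [← h]; abel
      rw [h2, add_sub_cancel_left]
    exact goal_eq
  -- trace of proj Ψ times the witness element
  have htrP : ∀ t : Idx d, (proj (Psi t.1.1.1 t.1.1.2 t.2) * Mw t).trace = ((co t.2 : ℝ):ℂ) := by
    intro t
    rw [hMw_def]
    rw [Matrix.mul_smul, Matrix.trace_smul, trace_proj_proj, psi_norm (hne t), one_mul,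
      smul_eq_mul, mul_one]
  -- the number of pairs
  have hNs : (2:ℂ) * ((Fintype.card {p : Fin d × Fin d // p.1 < p.2}) : ℂ)
      = ((d * d - d : ℕ) : ℂ) := by
    have h := sum_pairs (d := d) (fun _ => (1:ℂ))
    simp only [Finset.sum_const, Finset.card_univ, nsmul_eq_mul, mul_one, card_offdiag] at h
    rw [← h]; ring
  -- sum of the coefficients
  have hcosum : ∑ t : Idx d, ((co t.2 : ℝ):ℂ) = ((d * d - d : ℕ) : ℂ) * (((c:ℝ):ℂ) + 1) := by
    rw [Fintype.sum_prod_type]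
    have h4 : ∑ k : Fin 4, ((co k : ℝ):ℂ) = 2 * (((c:ℝ):ℂ) + 1) := by
      rw [Fin.sum_univ_four, hco_eval.1, hco_eval.2.1, hco_eval.2.2.1, hco_eval.2.2.2]
      push_cast
      ring
    rw [Finset.sum_congr rfl (fun s _ => h4), Finset.sum_const, Finset.card_univ,
      nsmul_eq_mul, ← mul_assoc, mul_comm ((Fintype.card {p : Fin d × Fin d // p.1 < p.2}) : ℂ) 2,
      hNs]
  -- the total trace for the witness POVM
  have htot : ∑ t : Idx d, (rhoE lam σ t * Mw t).trace
      = (lam : ℂ) * (((d * d - d : ℕ) : ℂ) * (((c:ℝ):ℂ) + 1)) + ((1 - lam : ℝ) : ℂ) := by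
    have hterm : ∀ t : Idx d, (rhoE lam σ t * Mw t).trace
        = (lam : ℂ) * ((co t.2 : ℝ):ℂ) + ((1 - lam : ℝ) : ℂ) * (σ * Mw t).trace := by
      intro t
      rw [rhoE, Matrix.add_mul, Matrix.smul_mul, Matrix.smul_mul, Matrix.trace_add,
        Matrix.trace_smul, Matrix.trace_smul, htrP t, smul_eq_mul, smul_eq_mul]
    rw [Finset.sum_congr rfl (fun t _ => hterm t), Finset.sum_add_distrib, ← Finset.mul_sum,
      ← Finset.mul_sum, hcosum, ← Matrix.trace_sum, ← Matrix.mul_sum, hMw_sum, Matrix.mul_one,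
      hσtr, mul_one]
  -- cast of the pair count
  have hnumR : ((d * d - d : ℕ) : ℝ) = (d:ℝ) * (d:ℝ) - (d:ℝ) := by
    have : d ≤ d * d := Nat.le_mul_of_pos_left d (by omega)
    push_cast [Nat.cast_sub this]
    ring
  have hnumC : ((d * d - d : ℕ) : ℂ) = (((d:ℝ) * (d:ℝ) - (d:ℝ) : ℝ) : ℂ) := by
    rw [← hnumR]
    push_cast
    ring
  -- the key real identity
  have hval : (1 + lam * ((d : ℝ) ^ 2 - 1)) / (2 * (d:ℝ) * ((d:ℝ) - 1))
      = 1 / (2 * (d:ℝ) * ((d:ℝ) - 1)) * (lam * (((d:ℝ) * (d:ℝ) - (d:ℝ)) * (c + 1)) + (1 - lam)) := by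
    rw [hc_def]
    field_simp
    ring
  constructor
  · -- membership
    refine ⟨Mw, hMw_psd, hMw_sum, ?_⟩
    rw [← Finset.mul_sum, ← Complex.re_sum, htot]
    rw [show (lam : ℂ) * (((d * d - d : ℕ) : ℂ) * (((c:ℝ):ℂ) + 1)) + ((1 - lam : ℝ) : ℂ)
        = ((lam * (((d:ℝ) * (d:ℝ) - (d:ℝ)) * (c + 1)) + (1 - lam) : ℝ) : ℂ) by
      rw [hnumC]; push_cast; ring]
    rw [Complex.ofReal_re]
    exact hval
  · -- upper bound
    rintro x ⟨M, hMpsd, hMsum, rfl⟩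
    rw [← Finset.mul_sum]
    have hre : ∀ t : Idx d, ((rhoE lam σ t * M t).trace).re
        = lam * ((proj (Psi t.1.1.1 t.1.1.2 t.2) * M t).trace).re
          + (1 - lam) * ((σ * M t).trace).re := by
      intro t
      rw [rhoE, Matrix.add_mul, Matrix.smul_mul, Matrix.smul_mul, Matrix.trace_add,
        Matrix.trace_smul, Matrix.trace_smul]
      simp [Complex.add_re, Complex.mul_re]
    rw [Finset.sum_congr rfl (fun t _ => hre t), Finset.sum_add_distrib, ← Finset.mul_sum,
      ← Finset.mul_sum]
    have hσsum : ∑ t : Idx d, ((σ * M t).trace).re = 1 := by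
      rw [← Complex.re_sum, ← Matrix.trace_sum, ← Matrix.mul_sum, hMsum, Matrix.mul_one, hσtr]
      simp
    rw [hσsum, mul_one]
    have hPle : ∑ t : Idx d, ((proj (Psi t.1.1.1 t.1.1.2 t.2) * M t).trace).re
        ≤ (d:ℝ) * (d:ℝ) := by
      have hper : ∀ t : Idx d, ((proj (Psi t.1.1.1 t.1.1.2 t.2) * M t).trace).re
          ≤ ((M t).trace).re := by
        intro t
        have h0 := trace_mul_re_nonneg (one_sub_proj_psd (psi_norm (hne t) t.2)) (hMpsd t)
        rw [Matrix.sub_mul, Matrix.one_mul, Matrix.trace_sub, Complex.sub_re] at h0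
        linarith
      calc ∑ t : Idx d, ((proj (Psi t.1.1.1 t.1.1.2 t.2) * M t).trace).re
          ≤ ∑ t : Idx d, ((M t).trace).re := Finset.sum_le_sum (fun t _ => hper t)
        _ = ((∑ t : Idx d, M t).trace).re := by rw [← Complex.re_sum, ← Matrix.trace_sum]
        _ = (d:ℝ) * (d:ℝ) := by
            rw [hMsum, Matrix.trace_one]
            simp [Fintype.card_prod]
    have hden0 : 0 < 2 * (d:ℝ) * ((d:ℝ) - 1) := by nlinarith
    have hη : 0 ≤ 1 / (2 * (d:ℝ) * ((d:ℝ) - 1)) := le_of_lt (one_div_pos.mpr hden0)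
    have hfinal : 1 / (2 * (d:ℝ) * ((d:ℝ) - 1)) *
          (lam * ((d:ℝ) * (d:ℝ)) + (1 - lam))
        = (1 + lam * ((d : ℝ) ^ 2 - 1)) / (2 * (d:ℝ) * ((d:ℝ) - 1)) := by
      field_simp
      ring
    have hmono : lam * (∑ t : Idx d, ((proj (Psi t.1.1.1 t.1.1.2 t.2) * M t).trace).re)
        ≤ lam * ((d:ℝ) * (d:ℝ)) := by
      exact mul_le_mul_of_nonneg_left hPle hlam0.le
    calc 1 / (2 * (d:ℝ) * ((d:ℝ) - 1)) *
          (lam * (∑ t : Idx d, ((proj (Psi t.1.1.1 t.1.1.2 t.2) * M t).trace).re) + (1 - lam))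
        ≤ 1 / (2 * (d:ℝ) * ((d:ℝ) - 1)) * (lam * ((d:ℝ) * (d:ℝ)) + (1 - lam)) := by
          apply mul_le_mul_of_nonneg_left _ hη
          linarith
      _ = (1 + lam * ((d : ℝ) ^ 2 - 1)) / (2 * (d:ℝ) * ((d:ℝ) - 1)) := hfinal
end
end

section
/- For the two-qudit ensemble E of the 2d(d−1) states ρ_{i,j}^{(k)} = λ|Ψ_{i,j}^{(k)}⟩⟨Ψ_{i,j}^{(k)}| + (1−λ)σ with equal priors 1/(2d(d−1)), the quantity q_G(E) = max over POVMs of ∑ η Tr(ρ^PT M) equals (2 + λ(d²−2)) / (4d(d−1)), achieved by the product-basis POVM with M_{i,j}^{(1)} = |ii⟩⟨ii|/(d−1), M_{i,j}^{(2)} = |jj⟩⟨jj|/(d−1), M_{i,j}^{(3)} = |ij⟩⟨ij|, M_{i,j}^{(4)} = |ji⟩⟨ji|. -/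
open Matrix ComplexOrder Kronecker

noncomputable section

-- basic lemmas
lemma proj_apply {ι : Type*} [Fintype ι] (v : ι → ℂ) (p q : ι) :
    proj v p q = v p * (starRingEnd ℂ) (v q) := rfl

lemma proj_smul {ι : Type*} [Fintype ι] (c : ℂ) (v : ι → ℂ) :
    proj (c • v) = (c * (starRingEnd ℂ) c) • proj v := by
  ext p q; simp [proj, vecMulVec]; ring

lemma proj_posSemidef {ι : Type*} [Fintype ι] (v : ι → ℂ) : (proj v).PosSemidef := by
  refine posSemidef_iff_dotProduct_mulVec.mpr ⟨?_, ?_⟩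
  · ext p q
    simp [proj, vecMulVec, conjTranspose_apply, mul_comm]
  · intro x
    have h : (star x) ⬝ᵥ (proj v *ᵥ x) = (starRingEnd ℂ) ((star v) ⬝ᵥ x) * ((star v) ⬝ᵥ x) := by
      simp [proj, vecMulVec, dotProduct, mulVec, Finset.mul_sum, Finset.sum_mul, map_sum]
      rw [Finset.sum_comm]
      apply Finset.sum_congr rfl; intro i _
      apply Finset.sum_congr rfl; intro j _
      ring
    rw [h]
    exact star_mul_self_nonneg _

lemma trace_PT {d : ℕ} (M : Op2 d) : (PT M).trace = M.trace := by
  simp [PT, trace, diag]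

lemma psd_trace_nonneg {n : Type*} [Fintype n] [DecidableEq n] {M : Matrix n n ℂ}
    (hM : M.PosSemidef) : 0 ≤ M.trace := by
  apply Finset.sum_nonneg
  intro p _
  have := hM.dotProduct_mulVec_nonneg (Pi.single p 1)
  simpa [mulVec, dotProduct, Pi.single_apply] using this

lemma trace_mul_psd_nonneg {n : Type*} [Fintype n] [DecidableEq n] {A B : Matrix n n ℂ}
    (hA : A.PosSemidef) (hB : B.PosSemidef) : 0 ≤ (A * B).trace := by
  obtain ⟨C, rfl⟩ : ∃ C : Matrix n n ℂ, A = Cᴴ * C := by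
    open scoped MatrixOrder in exact CStarAlgebra.nonneg_iff_eq_star_mul_self.mp hA.nonneg
  rw [mul_assoc, trace_mul_comm]
  exact psd_trace_nonneg (hB.mul_mul_conjTranspose_same C)

lemma sqrt2_fact : ((Real.sqrt 2 : ℂ))⁻¹ * (starRingEnd ℂ) ((Real.sqrt 2 : ℂ))⁻¹ = 1/2 := by
  rw [← Complex.ofReal_inv, Complex.conj_ofReal, ← Complex.ofReal_mul, ← mul_inv,
      Real.mul_self_sqrt (by norm_num : (0:ℝ) ≤ 2)]
  norm_num

def wvec {d : ℕ} (i j : Fin d) : Fin 4 → ((Fin d × Fin d) → ℂ) := fun k =>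
  ![ ket2 i i + ket2 j j, ket2 i i - ket2 j j, ket2 i j + ket2 j i, ket2 i j - ket2 j i ] k

lemma proj_Psi {d : ℕ} (i j : Fin d) (k : Fin 4) :
    proj (Psi i j k) = (1/2 : ℂ) • proj (wvec i j k) := by
  have h : ∀ v : (Fin d × Fin d) → ℂ, proj (((Real.sqrt 2 : ℂ))⁻¹ • v) = (1/2 : ℂ) • proj v := by
    intro v; rw [proj_smul, sqrt2_fact]
  fin_cases k <;> exact h _

def fdiag {d : ℕ} (i j : Fin d) : (Fin d × Fin d) → ℂ := fun p =>
  if (p.1 = i ∨ p.1 = j) ∧ (p.2 = i ∨ p.2 = j) then 0 else (1/2 : ℂ)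

abbrev V {d : ℕ} (a b c e : Fin d) : Op2 d := vecMulVec (ket2 a b) (star (ket2 c e))

lemma PT_V {d : ℕ} (a b c e : Fin d) : PT (V a b c e) = V a e c b := by
  ext ⟨p1, p2⟩ ⟨q1, q2⟩
  simp only [PT, Matrix.of_apply, vecMulVec_apply, ket2, Pi.star_apply, Prod.mk.injEq, star_one, star_zero]
  by_cases h1 : p1 = a <;> by_cases h2 : p2 = e <;> by_cases h3 : q1 = c <;>
    by_cases h4 : q2 = b <;> simp_all

lemma PT_add {d : ℕ} (A B : Op2 d) : PT (A + B) = PT A + PT B := by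
  ext p q; simp [PT]

lemma PT_sub {d : ℕ} (A B : Op2 d) : PT (A - B) = PT A - PT B := by
  ext p q; simp [PT]

lemma PT_smul {d : ℕ} (c : ℂ) (A : Op2 d) : PT (c • A) = c • PT A := by
  ext p q; simp [PT]

lemma proj_add' {ι : Type*} [Fintype ι] (u v : ι → ℂ) :
    proj (u + v) = vecMulVec u (star u) + vecMulVec v (star v)
      + vecMulVec u (star v) + vecMulVec v (star u) := by
  ext p q; simp [proj, vecMulVec]; ring

lemma proj_sub' {ι : Type*} [Fintype ι] (u v : ι → ℂ) :
    proj (u - v) = vecMulVec u (star u) + vecMulVec v (star v)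
      - vecMulVec u (star v) - vecMulVec v (star u) := by
  ext p q; simp [proj, vecMulVec]; ring

lemma proj_ket2V {d : ℕ} (a b : Fin d) : proj (ket2 a b) = V a b a b := rfl

lemma hD {d : ℕ} {i j : Fin d} (hij : i ≠ j) :
    (1/2 : ℂ) • (1 : Op2 d) = Matrix.diagonal (fdiag i j)
      + (1/2 : ℂ) • (V i i i i + V j j j j + V i j i j + V j i j i) := by
  ext ⟨p1, p2⟩ ⟨q1, q2⟩
  simp only [Matrix.smul_apply, Matrix.one_apply, Matrix.add_apply, Matrix.diagonal_apply,
    fdiag, vecMulVec_apply, ket2, Pi.star_apply, Prod.mk.injEq, star_one, star_zero,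
    smul_eq_mul]
  by_cases h1 : p1 = i <;> by_cases h2 : p1 = j <;> by_cases h3 : p2 = i <;>
    by_cases h4 : p2 = j <;> by_cases h5 : q1 = p1 <;> by_cases h6 : q2 = p2 <;>
    simp_all <;> norm_num <;> simp_all [eq_comm]

lemma key_eq {d : ℕ} {i j : Fin d} (hij : i ≠ j) (k : Fin 4) :
    (1/2 : ℂ) • (1 : Op2 d) - PT (proj (Psi i j k)) =
      Matrix.diagonal (fdiag i j) + proj (Psi i j (![3,2,1,0] k)) := by
  have e0 : PT (proj ((ket2 i i) + (ket2 j j))) = V i i i i + V j j j j + V i j j i + V j i i j := by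
    rw [proj_add', PT_add, PT_add, PT_add, PT_V, PT_V, PT_V, PT_V]
  have e1 : PT (proj ((ket2 i i) - (ket2 j j))) = V i i i i + V j j j j - V i j j i - V j i i j := by
    rw [proj_sub', PT_sub, PT_sub, PT_add, PT_V, PT_V, PT_V, PT_V]
  have e2 : PT (proj ((ket2 i j) + (ket2 j i))) = V i j i j + V j i j i + V i i j j + V j j i i := by
    rw [proj_add', PT_add, PT_add, PT_add, PT_V, PT_V, PT_V, PT_V]
  have e3 : PT (proj ((ket2 i j) - (ket2 j i))) = V i j i j + V j i j i - V i i j j - V j j i i := by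
    rw [proj_sub', PT_sub, PT_sub, PT_add, PT_V, PT_V, PT_V, PT_V]
  have f0 : proj ((ket2 i i) + (ket2 j j)) = V i i i i + V j j j j + V i i j j + V j j i i := proj_add' _ _
  have f1 : proj ((ket2 i i) - (ket2 j j)) = V i i i i + V j j j j - V i i j j - V j j i i := proj_sub' _ _
  have f2 : proj ((ket2 i j) + (ket2 j i)) = V i j i j + V j i j i + V i j j i + V j i i j := proj_add' _ _
  have f3 : proj ((ket2 i j) - (ket2 j i)) = V i j i j + V j i j i - V i j j i - V j i i j := proj_sub' _ _
  have sh : ∀ k1 k2 : Fin 4, (1/2 : ℂ) • (1 : Op2 d) - PT (proj (Psi i j k1)) =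
      Matrix.diagonal (fdiag i j) + proj (Psi i j k2) ↔
      (1/2 : ℂ) • (1 : Op2 d) - (1/2 : ℂ) • PT (proj (wvec i j k1)) =
      Matrix.diagonal (fdiag i j) + (1/2 : ℂ) • proj (wvec i j k2) := by
    intro k1 k2; rw [proj_Psi, proj_Psi, PT_smul]
  fin_cases k <;> simp only [Fin.zero_eta, Fin.mk_one, Fin.reduceFinMk]
  · rw [show (![3,2,1,0] (0 : Fin 4) : Fin 4) = 3 from rfl, sh,
        show wvec i j (0 : Fin 4) = ket2 i i + ket2 j j from rfl,
        show wvec i j 3 = ket2 i j - ket2 j i from rfl, e0, f3, hD hij]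
    module
  · rw [show (![3,2,1,0] (1 : Fin 4) : Fin 4) = 2 from rfl, sh,
        show wvec i j (1 : Fin 4) = ket2 i i - ket2 j j from rfl,
        show wvec i j 2 = ket2 i j + ket2 j i from rfl, e1, f2, hD hij]
    module
  · rw [show (![3,2,1,0] (2 : Fin 4) : Fin 4) = 1 from rfl, sh,
        show wvec i j (2 : Fin 4) = ket2 i j + ket2 j i from rfl,
        show wvec i j 1 = ket2 i i - ket2 j j from rfl, e2, f1, hD hij]
    module
  · rw [show (![3,2,1,0] (3 : Fin 4) : Fin 4) = 0 from rfl, sh,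
        show wvec i j (3 : Fin 4) = ket2 i j - ket2 j i from rfl,
        show wvec i j 0 = ket2 i i + ket2 j j from rfl, e3, f0, hD hij]
    module

lemma fdiag_nonneg {d : ℕ} (i j : Fin d) (p : Fin d × Fin d) : 0 ≤ fdiag i j p := by
  unfold fdiag
  split_ifs
  · exact le_refl _
  · rw [show ((1:ℂ)/2) = ((1/2 : ℝ) : ℂ) by norm_num]
    rw [Complex.zero_le_real]
    norm_num

lemma half_psd {d : ℕ} {i j : Fin d} (hij : i ≠ j) (k : Fin 4) :
    ((1/2 : ℂ) • (1 : Op2 d) - PT (proj (Psi i j k))).PosSemidef := by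
  rw [key_eq hij k]
  exact (Matrix.PosSemidef.diagonal (fdiag_nonneg i j)).add (proj_posSemidef _)

lemma sum_proj_ket2 {d : ℕ} : ∑ p : Fin d × Fin d, proj (ket2 p.1 p.2) = (1 : Op2 d) := by
  ext p q
  rw [Matrix.sum_apply]
  simp only [proj_apply, ket2, Matrix.one_apply]
  by_cases h : p = q
  · subst h
    rw [Finset.sum_eq_single p]
    · simp
    · intro b _ hb
      simp [if_neg (fun hh : p = b => hb hh.symm)]
    · simp
  · rw [Finset.sum_eq_zero, if_neg h]
    intro v _
    by_cases hp : p = v <;> by_cases hq : q = v <;> simp_all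

lemma sum_pairs {M : Type*} [AddCommMonoid M] {d : ℕ} (f : Fin d → Fin d → M) :
    ∑ p : {p : Fin d × Fin d // p.1 < p.2}, (f p.1.1 p.1.2 + f p.1.2 p.1.1) =
      ∑ p ∈ (Finset.univ : Finset (Fin d)).offDiag, f p.1 p.2 := by
  classical
  have h1 : ∑ p : {p : Fin d × Fin d // p.1 < p.2}, (f p.1.1 p.1.2 + f p.1.2 p.1.1)
      = ∑ p ∈ Finset.univ.filter (fun p : Fin d × Fin d => p.1 < p.2), (f p.1 p.2 + f p.2 p.1) :=
    (Finset.sum_subtype (Finset.univ.filter (fun p : Fin d × Fin d => p.1 < p.2))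
      (p := fun p : Fin d × Fin d => p.1 < p.2) (fun x => by simp)
      (fun p => f p.1 p.2 + f p.2 p.1)).symm
  rw [h1, Finset.sum_add_distrib]
  have h2 : ∑ p ∈ Finset.univ.filter (fun p : Fin d × Fin d => p.1 < p.2), f p.2 p.1
      = ∑ p ∈ Finset.univ.filter (fun p : Fin d × Fin d => p.2 < p.1), f p.1 p.2 := by
    exact Finset.sum_equiv (Equiv.prodComm (Fin d) (Fin d)) (fun i => by simp) (fun i _ => rfl)
  rw [h2]
  have h3 : (Finset.univ : Finset (Fin d)).offDiag
      = Finset.univ.filter (fun p : Fin d × Fin d => p.1 < p.2)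
        ∪ Finset.univ.filter (fun p : Fin d × Fin d => p.2 < p.1) := by
    ext p
    simp only [Finset.mem_offDiag, Finset.mem_union, Finset.mem_filter, Finset.mem_univ,
      true_and]
    exact ne_iff_lt_or_gt
  rw [h3, Finset.sum_union]
  exact Finset.disjoint_left.mpr (by
    rintro p hp hq
    simp only [Finset.mem_filter] at hp hq
    exact absurd hq.2 (asymm hp.2))

lemma sum_offDiag_eq {M : Type*} [AddCommGroup M] {d : ℕ} (f : Fin d → Fin d → M) :
    ∑ p ∈ (Finset.univ : Finset (Fin d)).offDiag, f p.1 p.2 =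
      (∑ p : Fin d × Fin d, f p.1 p.2) - ∑ a : Fin d, f a a := by
  classical
  have h : (Finset.univ : Finset (Fin d)).offDiag
      = Finset.univ.filter (fun p : Fin d × Fin d => ¬ p.1 = p.2) := by
    ext p; simp [Finset.mem_offDiag]
  have hdiag : ∑ p ∈ Finset.univ.filter (fun p : Fin d × Fin d => p.1 = p.2), f p.1 p.2
      = ∑ a : Fin d, f a a := by
    rw [Finset.sum_filter, Fintype.sum_prod_type]
    simp
  rw [h, eq_sub_iff_add_eq, ← hdiag, Finset.sum_filter_not_add_sum_filter]

lemma sum_Mprod {d : ℕ} (hd : 2 ≤ d) :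
    ∑ t : ({p : Fin d × Fin d // p.1 < p.2} × Fin 4), Mprod t.1.1.1 t.1.1.2 t.2 = (1 : Op2 d) := by
  have hc : (d:ℂ) * ((d:ℂ)-1)⁻¹ = ((d:ℂ)-1)⁻¹ + 1 := by
    have hdne : ((d:ℂ) - 1) ≠ 0 := by
      have h1 : (d:ℂ) ≠ 1 := by
        intro h
        have : d = 1 := by exact_mod_cast h
        omega
      exact sub_ne_zero.mpr h1
    field_simp
    ring
  rw [Fintype.sum_prod_type]
  have hk : ∀ s : {p : Fin d × Fin d // p.1 < p.2}, ∑ k : Fin 4, Mprod s.1.1 s.1.2 k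
      = ((((d:ℂ)-1)⁻¹ • proj (ket2 s.1.1 s.1.1) + proj (ket2 s.1.1 s.1.2))
        + (((d:ℂ)-1)⁻¹ • proj (ket2 s.1.2 s.1.2) + proj (ket2 s.1.2 s.1.1))) := by
    intro s
    rw [Fin.sum_univ_four]
    show ((d : ℂ) - 1)⁻¹ • proj (ket2 s.1.1 s.1.1) + ((d : ℂ) - 1)⁻¹ • proj (ket2 s.1.2 s.1.2)
      + proj (ket2 s.1.1 s.1.2) + proj (ket2 s.1.2 s.1.1) = _
    abel
  rw [Finset.sum_congr rfl (fun s _ => hk s)]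
  rw [sum_pairs (fun i j => ((d:ℂ)-1)⁻¹ • proj (ket2 i i) + proj (ket2 i j)),
      sum_offDiag_eq (fun i j => ((d:ℂ)-1)⁻¹ • proj (ket2 i i) + proj (ket2 i j))]
  rw [Finset.sum_add_distrib, Finset.sum_add_distrib, sum_proj_ket2]
  have e1 : ∑ p : Fin d × Fin d, ((d:ℂ)-1)⁻¹ • proj (ket2 p.1 p.1)
      = (d:ℂ) • ∑ a : Fin d, ((d:ℂ)-1)⁻¹ • proj (ket2 a a) := by
    rw [Fintype.sum_prod_type]
    rw [Finset.smul_sum]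
    apply Finset.sum_congr rfl
    intro a _
    simp only [Finset.sum_const, Finset.card_univ, Fintype.card_fin]
    rw [← Nat.cast_smul_eq_nsmul ℂ]
  rw [e1, Finset.smul_sum]
  have e2 : ∀ a : Fin d, (d:ℂ) • (((d:ℂ)-1)⁻¹ • proj (ket2 a a))
      = ((d:ℂ)-1)⁻¹ • proj (ket2 a a) + proj (ket2 a a) := by
    intro a
    rw [smul_smul, hc, add_smul, one_smul]
  rw [Finset.sum_congr rfl (fun a _ => e2 a), Finset.sum_add_distrib]
  abel

lemma trace_mul_proj {d : ℕ} (A : Op2 d) (a b : Fin d) :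
    (A * proj (ket2 a b)).trace = A (a,b) (a,b) := by
  rw [trace, Fintype.sum_eq_single ((a,b) : Fin d × Fin d)]
  · rw [diag]
    simp only [Matrix.mul_apply, proj_apply, ket2]
    rw [Finset.sum_eq_single ((a,b) : Fin d × Fin d)]
    · simp
    · intro q _ hq
      simp [if_neg hq]
    · simp
  · intro p hp
    rw [diag]
    simp only [Matrix.mul_apply, proj_apply, ket2]
    apply Finset.sum_eq_zero
    intro q _
    by_cases hq : q = (a,b) <;> simp [hq, if_neg hp]

lemma trace_PT_proj_Psi {d : ℕ} (i j : Fin d) (k : Fin 4) (a b : Fin d) :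
    (PT (proj (Psi i j k)) * proj (ket2 a b)).trace
      = (1/2 : ℂ) * (wvec i j k (a,b) * (starRingEnd ℂ) (wvec i j k (a,b))) := by
  rw [proj_Psi, PT_smul, smul_mul_assoc, trace_smul, trace_mul_proj]
  rw [smul_eq_mul]
  congr 1

lemma trace_Psi_Mprod {d : ℕ} {i j : Fin d} (hij : i ≠ j) :
    ∑ k : Fin 4, (PT (proj (Psi i j k)) * Mprod i j k).trace = ((d:ℂ)-1)⁻¹ + 1 := by
  rw [Fin.sum_univ_four]
  rw [show Mprod i j 0 = ((d : ℂ) - 1)⁻¹ • proj (ket2 i i) from rfl,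
      show Mprod i j 1 = ((d : ℂ) - 1)⁻¹ • proj (ket2 j j) from rfl,
      show Mprod i j 2 = proj (ket2 i j) from rfl,
      show Mprod i j 3 = proj (ket2 j i) from rfl]
  rw [mul_smul_comm, mul_smul_comm, trace_smul, trace_smul, smul_eq_mul, smul_eq_mul]
  rw [trace_PT_proj_Psi, trace_PT_proj_Psi, trace_PT_proj_Psi, trace_PT_proj_Psi]
  have w0 : wvec i j 0 (i,i) = 1 := by
    simp [wvec, ket2, Prod.mk.injEq, hij, Ne.symm hij]
  have w1 : wvec i j 1 (j,j) = -1 := by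
    simp [wvec, ket2, Prod.mk.injEq, hij, Ne.symm hij]
  have w2 : wvec i j 2 (i,j) = 1 := by
    simp [wvec, ket2, Prod.mk.injEq, hij, Ne.symm hij]
  have w3 : wvec i j 3 (j,i) = -1 := by
    simp [wvec, ket2, Prod.mk.injEq, hij, Ne.symm hij]
  rw [w0, w1, w2, w3]
  simp only [_root_.map_one, map_neg, mul_one, neg_mul, neg_neg, one_mul]
  ring

lemma smul_proj_psd {ι : Type*} [Fintype ι] (r : ℝ) (hr : 0 ≤ r) (v : ι → ℂ) :
    ((r:ℂ) • proj v).PosSemidef := by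
  have h : ((r:ℂ)) = (Real.sqrt r : ℂ) * (starRingEnd ℂ) (Real.sqrt r : ℂ) := by
    rw [Complex.conj_ofReal, ← Complex.ofReal_mul, Real.mul_self_sqrt hr]
  rw [h, ← proj_smul]
  exact proj_posSemidef _

lemma Mprod_psd {d : ℕ} (hd : 2 ≤ d) (i j : Fin d) (k : Fin 4) : (Mprod i j k).PosSemidef := by
  have h : ((d:ℂ) - 1)⁻¹ = (((((d:ℝ) - 1)⁻¹ : ℝ)) : ℂ) := by push_cast; ring
  have hr : (0:ℝ) ≤ ((d:ℝ) - 1)⁻¹ := by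
    have : (2:ℝ) ≤ d := by exact_mod_cast hd
    have : (0:ℝ) ≤ (d:ℝ) - 1 := by linarith
    positivity
  fin_cases k
  · show (((d:ℂ)-1)⁻¹ • proj (ket2 i i)).PosSemidef
    rw [h]; exact smul_proj_psd _ hr _
  · show (((d:ℂ)-1)⁻¹ • proj (ket2 j j)).PosSemidef
    rw [h]; exact smul_proj_psd _ hr _
  · exact proj_posSemidef _
  · exact proj_posSemidef _

lemma obj_eq {d : ℕ} (lam : ℝ) (σ : Op2 d) (hσtr : σ.trace = 1) (M : Idx d → Op2 d)
    (hsum : ∑ t, M t = 1) (η : ℝ) :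
    ∑ t, η * ((PT (rhoE lam σ t) * M t).trace).re
      = η * lam * (∑ t, ((PT (proj (Psi t.1.1.1 t.1.1.2 t.2)) * M t).trace).re)
        + η * (1 - lam) := by
  have hPT : ∀ t : Idx d, PT (rhoE lam σ t)
      = (lam:ℂ) • PT (proj (Psi t.1.1.1 t.1.1.2 t.2)) + ((1 - lam:ℝ):ℂ) • PT σ := by
    intro t; rw [rhoE, PT_add, PT_smul, PT_smul]
  have hterm : ∀ t : Idx d, ((PT (rhoE lam σ t) * M t).trace).re
      = lam * ((PT (proj (Psi t.1.1.1 t.1.1.2 t.2)) * M t).trace).re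
        + (1-lam) * ((PT σ * M t).trace).re := by
    intro t
    rw [hPT t, add_mul, smul_mul_assoc, smul_mul_assoc, trace_add, trace_smul, trace_smul]
    simp [Complex.add_re, Complex.mul_re]
  have hY : ∑ t : Idx d, ((PT σ * M t).trace).re = 1 := by
    rw [← Complex.re_sum, ← trace_sum, ← Matrix.mul_sum, hsum, mul_one, trace_PT, hσtr]
    simp
  calc ∑ t, η * ((PT (rhoE lam σ t) * M t).trace).re
      = ∑ t : Idx d, ((η * lam) * ((PT (proj (Psi t.1.1.1 t.1.1.2 t.2)) * M t).trace).re
        + (η * (1-lam)) * ((PT σ * M t).trace).re) := by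
        apply Finset.sum_congr rfl
        intro t _
        rw [hterm t]; ring
    _ = η * lam * (∑ t, ((PT (proj (Psi t.1.1.1 t.1.1.2 t.2)) * M t).trace).re)
        + η * (1 - lam) := by
        rw [Finset.sum_add_distrib, ← Finset.mul_sum, ← Finset.mul_sum, hY, mul_one]

lemma card_pairs {d : ℕ} :
    ((Fintype.card {p : Fin d × Fin d // p.1 < p.2} : ℝ)) * 2 = (d:ℝ) * d - d := by
  have h := sum_pairs (d := d) (fun _ _ => (1:ℝ))
  simp only [Finset.sum_const, Finset.card_univ, Finset.offDiag_card, Fintype.card_fin,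
    nsmul_eq_mul, mul_one] at h
  have hle : d ≤ d * d := by
    rcases Nat.eq_zero_or_pos d with h0 | h0
    · simp [h0]
    · exact Nat.le_mul_of_pos_left d h0
  rw [Nat.cast_sub hle] at h
  push_cast at h
  linarith [h]

lemma sum_A_Mprod {d : ℕ} (hd : 2 ≤ d) :
    ∑ t : Idx d, ((PT (proj (Psi t.1.1.1 t.1.1.2 t.2)) * Mprod t.1.1.1 t.1.1.2 t.2).trace).re
      = ((d:ℝ)*d - d)/2 * (((d:ℝ)-1)⁻¹ + 1) := by
  have hC : ∑ t : Idx d, ((PT (proj (Psi t.1.1.1 t.1.1.2 t.2)) * Mprod t.1.1.1 t.1.1.2 t.2).trace)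
      = ((((d:ℝ)*d - d)/2 * (((d:ℝ)-1)⁻¹ + 1) : ℝ) : ℂ) := by
    rw [Fintype.sum_prod_type]
    have h1 : ∀ s : {p : Fin d × Fin d // p.1 < p.2},
        ∑ k : Fin 4, ((PT (proj (Psi s.1.1 s.1.2 k)) * Mprod s.1.1 s.1.2 k).trace)
          = ((d:ℂ)-1)⁻¹ + 1 := fun s => trace_Psi_Mprod (ne_of_lt s.2)
    rw [Finset.sum_congr rfl (fun s _ => h1 s), Finset.sum_const, Finset.card_univ,
      nsmul_eq_mul]
    have hcard : ((Fintype.card {p : Fin d × Fin d // p.1 < p.2} : ℂ))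
        = ((((d:ℝ)*d - d)/2 : ℝ) : ℂ) := by
      have h2 := card_pairs (d := d)
      have : ((Fintype.card {p : Fin d × Fin d // p.1 < p.2} : ℝ)) = ((d:ℝ)*d - d)/2 := by
        linarith
      rw [← this]
      push_cast
      ring
    rw [hcard]
    push_cast
    ring
  rw [← Complex.re_sum, hC, Complex.ofReal_re]

lemma re_trace_le {d : ℕ} {i j : Fin d} (hij : i ≠ j) (k : Fin 4) {B : Op2 d}
    (hB : B.PosSemidef) :
    ((PT (proj (Psi i j k)) * B).trace).re ≤ 1/2 * (B.trace).re := by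
  have h0 := trace_mul_psd_nonneg (half_psd hij k) hB
  have hexp : (((1/2 : ℂ) • (1 : Op2 d) - PT (proj (Psi i j k))) * B).trace
      = (1/2:ℂ) * B.trace - (PT (proj (Psi i j k)) * B).trace := by
    rw [sub_mul, smul_mul_assoc, one_mul, trace_sub, trace_smul, smul_eq_mul]
  rw [hexp] at h0
  have h1 := (Complex.le_def.mp h0).1
  simp only [Complex.zero_re, Complex.sub_re, Complex.mul_re] at h1
  norm_num at h1 ⊢
  linarith

lemma trace_one_re {d : ℕ} : ((1 : Op2 d).trace).re = (d:ℝ)*d := by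
  rw [Matrix.trace_one]
  simp [Fintype.card_prod, Fintype.card_fin]

theorem qG_example {d : ℕ} (hd : 2 ≤ d) (lam : ℝ) (hlam0 : 0 < lam) (hlam1 : lam ≤ 1)
    (σ : Op2 d) (hσ : σ.PosSemidef ∧ σ.trace = 1) :
    IsGreatest
      {x | ∃ M : Idx d → Op2 d, (∀ t, (M t).PosSemidef) ∧ (∑ t, M t = 1) ∧
        x = ∑ t, (1 / (2 * d * (d - 1)) : ℝ) * ((PT (rhoE lam σ t) * M t).trace).re}
      ((2 + lam * ((d : ℝ) ^ 2 - 2)) / (4 * d * (d - 1))) ∧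
    ∑ t : Idx d, (1 / (2 * d * (d - 1)) : ℝ) *
        ((PT (rhoE lam σ t) * Mprod t.1.1.1 t.1.1.2 t.2).trace).re =
      (2 + lam * ((d : ℝ) ^ 2 - 2)) / (4 * d * (d - 1)) := by
  have hdR : (2:ℝ) ≤ (d:ℝ) := by exact_mod_cast hd
  have hdne : (d:ℝ) - 1 ≠ 0 := by linarith
  have hd0 : (d:ℝ) ≠ 0 := by linarith
  have hη : (0:ℝ) ≤ 1 / (2 * d * (d - 1)) := by
    apply div_nonneg (by norm_num)
    nlinarith
  have hEQ : ∑ t : Idx d, (1 / (2 * d * (d - 1)) : ℝ) *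
        ((PT (rhoE lam σ t) * Mprod t.1.1.1 t.1.1.2 t.2).trace).re =
      (2 + lam * ((d : ℝ) ^ 2 - 2)) / (4 * d * (d - 1)) := by
    rw [obj_eq lam σ hσ.2 (fun t => Mprod t.1.1.1 t.1.1.2 t.2) (sum_Mprod hd),
      sum_A_Mprod hd]
    field_simp
    ring
  refine ⟨⟨⟨fun t => Mprod t.1.1.1 t.1.1.2 t.2, fun t => Mprod_psd hd _ _ _,
      sum_Mprod hd, hEQ.symm⟩, ?_⟩, hEQ⟩
  rintro x ⟨M, hMpsd, hMsum, rfl⟩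
  rw [obj_eq lam σ hσ.2 M hMsum]
  have hsumle : ∑ t : Idx d, ((PT (proj (Psi t.1.1.1 t.1.1.2 t.2)) * M t).trace).re
      ≤ (d:ℝ) * d / 2 := by
    calc ∑ t : Idx d, ((PT (proj (Psi t.1.1.1 t.1.1.2 t.2)) * M t).trace).re
        ≤ ∑ t : Idx d, 1/2 * (((M t).trace).re) :=
          Finset.sum_le_sum (fun t _ => re_trace_le (ne_of_lt t.1.2) t.2 (hMpsd t))
      _ = 1/2 * (((1 : Op2 d)).trace).re := by
          rw [← Finset.mul_sum, ← Complex.re_sum, ← trace_sum, hMsum]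
      _ = (d:ℝ) * d / 2 := by rw [trace_one_re]; ring
  have hlη : (0:ℝ) ≤ 1 / (2 * d * (d - 1)) * lam := by
    apply mul_nonneg hη (le_of_lt hlam0)
  have step := mul_le_mul_of_nonneg_left hsumle hlη
  have hval : 1 / (2 * (d:ℝ) * (d - 1)) * lam * ((d:ℝ) * d / 2)
      + 1 / (2 * (d:ℝ) * (d - 1)) * (1 - lam)
      = (2 + lam * ((d : ℝ) ^ 2 - 2)) / (4 * d * (d - 1)) := by
    field_simp
    ring
  linarith
end
end
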